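/- Let n ≥ 5 be an integer, let G be a group, and let x_1, …, x_{n-2} ∈ G satisfy: (R) x_i^3 = 1 for 1 ≤ i ≤ n-2; (S) (x_i·x_{i+1})^2 = 1 for 1 ≤ i ≤ n-3; (Q) x_i·x_j = x_j·x_i for 1 ≤ i, j ≤ n-2 with |i-j| > 2; and the single relation x_1·x_2^{-1}·x_3 = x_3·x_1. Then x_i·x_{i+1}^{-1}·x_{i+2} = x_{i+2}·x_i holds for every i with 1 ≤ i ≤ n-4. -/
import Mathlib

theorem keyStep {G : Type*} [Group G] (a b c d : G)
    (hb : b ^ 3 = 1) (hc : c ^ 3 = 1) (hd : d ^ 3 = 1)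
    (hbc : (b * c) ^ 2 = 1) (hcd : (c * d) ^ 2 = 1)
    (had : a * d = d * a)
    (hT : a * b⁻¹ * c = c * a) : b * c⁻¹ * d = d * b := by
  have hb3 : b * b * b = 1 := by rw [← hb, pow_succ, pow_succ, pow_one]
  have hc3 : c * c * c = 1 := by rw [← hc, pow_succ, pow_succ, pow_one]
  have hd3 : d * d * d = 1 := by rw [← hd, pow_succ, pow_succ, pow_one]
  have h1 : b * c * b * c = 1 := by rw [← hbc, sq, ← mul_assoc]
  have h2 : c * d * c * d = 1 := by rw [← hcd, sq, ← mul_assoc]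
  have A1 : d * c * d = c⁻¹ := by
    calc d * c * d = c⁻¹ * (c * d * c * d) := by group
    _ = c⁻¹ * 1 := by rw [h2]
    _ = c⁻¹ := mul_one _
  have A2 : c * b * c = b⁻¹ := by
    calc c * b * c = b⁻¹ * (b * c * b * c) := by group
    _ = b⁻¹ * 1 := by rw [h1]
    _ = b⁻¹ := mul_one _
  have A3 : d * c * d⁻¹ = c⁻¹ * d := by
    calc d * c * d⁻¹ = (d * c * d) * ((d * d * d)⁻¹ * d) := by group
    _ = c⁻¹ * (1⁻¹ * d) := by rw [A1, hd3]
    _ = c⁻¹ * d := by group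
  have A3' : d * c⁻¹ * d⁻¹ = d⁻¹ * c := by
    calc d * c⁻¹ * d⁻¹ = (d * c * d⁻¹)⁻¹ := by group
    _ = (c⁻¹ * d)⁻¹ := by rw [A3]
    _ = d⁻¹ * c := by group
  have B1 : c * a * c⁻¹ = a * b⁻¹ := by
    calc c * a * c⁻¹ = (c * a) * c⁻¹ := by group
    _ = (a * b⁻¹ * c) * c⁻¹ := by rw [hT]
    _ = a * b⁻¹ := by group
  have B2 : c * b⁻¹ * c⁻¹ = c⁻¹ * b := by
    calc c * b⁻¹ * c⁻¹ = c * (c * b * c) * c⁻¹ := by rw [A2]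
    _ = (c * c * c) * c⁻¹ * b := by group
    _ = 1 * c⁻¹ * b := by rw [hc3]
    _ = c⁻¹ * b := by group
  have A6 : c⁻¹ * a * c = a * b⁻¹ * (c⁻¹ * b) := by
    calc c⁻¹ * a * c
        = (c * c * c)⁻¹ * (c * (c * a * c⁻¹) * c⁻¹) * (c * c * c) := by group
    _ = (c * c * c)⁻¹ * (c * (a * b⁻¹) * c⁻¹) * (c * c * c) := by rw [B1]
    _ = 1⁻¹ * (c * (a * b⁻¹) * c⁻¹) * 1 := by rw [hc3]
    _ = (c * a * c⁻¹) * (c * b⁻¹ * c⁻¹) := by group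
    _ = (a * b⁻¹) * (c * b⁻¹ * c⁻¹) := by rw [B1]
    _ = a * b⁻¹ * (c⁻¹ * b) := by rw [B2]
  have h5c : d * a * d⁻¹ = a := by
    calc d * a * d⁻¹ = (d * a) * d⁻¹ := by group
    _ = (a * d) * d⁻¹ := by rw [had]
    _ = a := by group
  have h5a : d * a⁻¹ * d⁻¹ = a⁻¹ := by
    calc d * a⁻¹ * d⁻¹ = (d * a * d⁻¹)⁻¹ := by group
    _ = a⁻¹ := by rw [h5c]
  have key1 : d * b⁻¹ * d⁻¹ = b⁻¹ * (c⁻¹ * b) := by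
    calc d * b⁻¹ * d⁻¹
        = (d * a⁻¹ * d⁻¹) * (d * (a * b⁻¹) * d⁻¹) := by group
    _ = a⁻¹ * (d * (a * b⁻¹) * d⁻¹) := by rw [h5a]
    _ = a⁻¹ * (d * (c * a * c⁻¹) * d⁻¹) := by rw [B1]
    _ = a⁻¹ * ((d * c * d⁻¹) * (d * a * d⁻¹) * (d * c⁻¹ * d⁻¹)) := by group
    _ = a⁻¹ * ((c⁻¹ * d) * a * (d⁻¹ * c)) := by rw [A3, h5c, A3']
    _ = a⁻¹ * (c⁻¹ * (d * a * d⁻¹) * c) := by group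
    _ = a⁻¹ * (c⁻¹ * a * c) := by rw [h5c]
    _ = a⁻¹ * (a * b⁻¹ * (c⁻¹ * b)) := by rw [A6]
    _ = b⁻¹ * (c⁻¹ * b) := by group
  have key2 : d * b * d⁻¹ = b⁻¹ * c * b := by
    calc d * b * d⁻¹ = (d * b⁻¹ * d⁻¹)⁻¹ := by group
    _ = (b⁻¹ * (c⁻¹ * b))⁻¹ := by rw [key1]
    _ = b⁻¹ * c * b := by group
  have D1 : b * c * b = c⁻¹ := by
    calc b * c * b = (b * c * b * c) * c⁻¹ := by group
    _ = 1 * c⁻¹ := by rw [h1]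
    _ = c⁻¹ := by group
  have B3 : b⁻¹ * c * b = b * c⁻¹ := by
    calc b⁻¹ * c * b = (b * b * b)⁻¹ * (b * (b * c * b)) := by group
    _ = 1⁻¹ * (b * (b * c * b)) := by rw [hb3]
    _ = b * (b * c * b) := by group
    _ = b * c⁻¹ := by rw [D1]
  calc b * c⁻¹ * d = (b⁻¹ * c * b) * d := by rw [B3]
  _ = (d * b * d⁻¹) * d := by rw [key2]
  _ = d * b := by group

theorem relT_of_relT_one (n : ℕ) (hn : 5 ≤ n) (G : Type*) [Group G] (x : ℕ → G)
    (hR : ∀ i, 1 ≤ i → i ≤ n - 2 → (x i) ^ 3 = 1)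
    (hS : ∀ i, 1 ≤ i → i ≤ n - 3 → (x i * x (i + 1)) ^ 2 = 1)
    (hQ : ∀ i j, 1 ≤ i → i ≤ n - 2 → 1 ≤ j → j ≤ n - 2 → (i + 2 < j ∨ j + 2 < i) →
      x i * x j = x j * x i)
    (hT1 : x 1 * (x 2)⁻¹ * x 3 = x 3 * x 1) :
    ∀ i, 1 ≤ i → i ≤ n - 4 → x i * (x (i + 1))⁻¹ * x (i + 2) = x (i + 2) * x i := by
  intro i
  induction i with
  | zero => intro h; omega
  | succ k ih =>
    intro _ hk
    rcases Nat.eq_zero_or_pos k with hk0 | hk1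
    · subst hk0
      exact hT1
    · have ihk := ih hk1 (by omega)
      have := keyStep (x k) (x (k + 1)) (x (k + 2)) (x (k + 3))
        (hR (k + 1) (by omega) (by omega))
        (hR (k + 2) (by omega) (by omega))
        (hR (k + 3) (by omega) (by omega))
        (hS (k + 1) (by omega) (by omega))
        (hS (k + 2) (by omega) (by omega))
        (hQ k (k + 3) (by omega) (by omega) (by omega) (by omega) (by omega))
        ihk
      simpa [show k + 1 + 1 = k + 2 from rfl, show k + 1 + 2 = k + 3 from rfl,
        show k + 2 + 1 = k + 3 from rfl] using this
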